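/- Let A be a join-semilattice, c ∈ A, and let ⟨θ,δ⟩ ↦ ⟨I_θ, I_δ⟩ (where I_θ = {a : a θ c}) and ⟨I₁,I₂⟩ ↦ ⟨ker π₂, ker π₁⟩ (where π₁, π₂ are the projections determined by φ_c) be the maps between pairs of complementary factor congruences of A and pairs of subsemilattices I₁, I₂ with A = I₁ ⊕_c I₂. These two maps are mutually inverse bijections. -/
import Mathlib


variable {α : Type*}

/-- `PMeet a b m`: the infimum of `{a, b}` exists and equals `m`. -/
def PMeet [SemilatticeSup α] (a b m : α) : Prop :=
  m ≤ a ∧ m ≤ b ∧ ∀ u, u ≤ a → u ≤ b → u ≤ m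

/-- Partial equation `a ∧ b = a' ∧ b'`: if either infimum exists, so does the
other and they are equal. -/
def MeetEq [SemilatticeSup α] (a b a' b' : α) : Prop :=
  (∀ m, PMeet a b m → PMeet a' b' m) ∧ (∀ m, PMeet a' b' m → PMeet a b m)

/-- Partial equation `(a ∧ b) ∨ y = a' ∧ b'`: if either side exists, so does
the other and they are equal. -/
def MeetJoinEq [SemilatticeSup α] (a b y a' b' : α) : Prop :=
  (∀ m, PMeet a b m → PMeet a' b' (m ⊔ y)) ∧
  (∀ m', PMeet a' b' m' → ∃ m, PMeet a b m ∧ m ⊔ y = m')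

/-- `φ_c(x₁, x₂, x)`: the conjunction of dist, p1, p2 and join. -/
def Phi [SemilatticeSup α] (c x₁ x₂ x : α) : Prop :=
  PMeet (x ⊔ x₁) (x ⊔ x₂) x ∧
  PMeet (x ⊔ x₁) (c ⊔ x₁) x₁ ∧
  PMeet (x ⊔ x₂) (c ⊔ x₂) x₂ ∧
  x₁ ⊔ x₂ = x ⊔ c

/-- A subsemilattice: a subset closed under join. -/
def SubSemilattice [SemilatticeSup α] (I : Set α) : Prop :=
  ∀ a ∈ I, ∀ b ∈ I, a ⊔ b ∈ I

/-- `A = I₁ ⊕_c I₂`: the generalized (c-)direct sum of two subsemilattices. -/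
structure CDirectSum [SemilatticeSup α] (c : α) (I₁ I₂ : Set α) : Prop where
  sub1 : SubSemilattice I₁
  sub2 : SubSemilattice I₂
  mod1 : ∀ x y : α, ∀ x₁ ∈ I₁, ∀ x₂ ∈ I₂, x₁ ⊔ x₂ ≤ x ⊔ c →
    MeetJoinEq (x ⊔ x₁) (x ⊔ x₂) y (x ⊔ y ⊔ x₁) (x ⊔ y ⊔ x₂)
  mod2 : ∀ x y : α, ∀ x₁ ∈ I₁, ∀ x₂ ∈ I₂, x ≤ x₁ ⊔ x₂ →
    MeetJoinEq (x ⊔ x₁) (c ⊔ x₁) y (x ⊔ y ⊔ x₁) (c ⊔ y ⊔ x₁) ∧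
    MeetJoinEq (x ⊔ x₂) (c ⊔ x₂) y (x ⊔ y ⊔ x₂) (c ⊔ y ⊔ x₂)
  abs1 : ∀ x₁ ∈ I₁, ∀ y₁ ∈ I₁, ∀ z₂ ∈ I₂, MeetEq x₁ (y₁ ⊔ z₂) x₁ (y₁ ⊔ c)
  abs2 : ∀ x₂ ∈ I₂, ∀ y₂ ∈ I₂, ∀ z₁ ∈ I₁, MeetEq x₂ (y₂ ⊔ z₁) x₂ (y₂ ⊔ c)
  exi : ∀ x₁ ∈ I₁, ∀ x₂ ∈ I₂, ∃ x : α, Phi c x₁ x₂ x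
  onto : ∀ x : α, ∃ x₁ ∈ I₁, ∃ x₂ ∈ I₂, Phi c x₁ x₂ x

/-- A congruence of a join-semilattice: an equivalence compatible with ⊔. -/
def IsCongruence [SemilatticeSup α] (r : α → α → Prop) : Prop :=
  Equivalence r ∧ ∀ a b a' b' : α, r a b → r a' b' → r (a ⊔ a') (b ⊔ b')

/-- Complementary factor congruences: trivial intersection and full relational
composition (equivalently, a ↦ (a/δ, a/θ) is an isomorphism A ≅ A/δ × A/θ). -/
def Complementary [SemilatticeSup α] (r s : α → α → Prop) : Prop :=
  (∀ a b : α, r a b → s a b → a = b) ∧ (∀ a b : α, ∃ z : α, r a z ∧ s z b)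

section Helpers
variable [SemilatticeSup α] {r s : α → α → Prop}

theorem pmeet_unique {a b m m' : α} (h : PMeet a b m) (h' : PMeet a b m') : m = m' :=
  le_antisymm (h'.2.2 m h.1 h.2.1) (h.2.2 m' h'.1 h'.2.1)

theorem pmeet_of_le {a b : α} (h : a ≤ b) : PMeet a b a :=
  ⟨le_rfl, h, fun _ hu _ => hu⟩

theorem cong_supr (hr : IsCongruence r) {a b : α} (e : α) (h : r a b) : r (a ⊔ e) (b ⊔ e) :=
  hr.2 a b e e h (hr.1.refl e)

theorem cong_interval (hr : IsCongruence r) {a b d : α} (hab : a ≤ b) (hbd : b ≤ d)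
    (h : r a d) : r a b := by
  have h2 : r (a ⊔ b) (d ⊔ b) := cong_supr hr b h
  rw [sup_eq_right.mpr hab, sup_eq_left.mpr hbd] at h2
  exact hr.1.trans h (hr.1.symm h2)

theorem rle_of_le (hr : IsCongruence r) {a b : α} (h : a ≤ b) : r (a ⊔ b) b := by
  rw [sup_eq_right.mpr h]; exact hr.1.refl b

theorem rle_of_rel (hr : IsCongruence r) {a b : α} (h : r a b) : r (a ⊔ b) b := by
  have := cong_supr hr b h; rwa [sup_idem] at this

theorem rle_trans (hr : IsCongruence r) {a b d : α} (h1 : r (a ⊔ b) b) (h2 : r (b ⊔ d) d) :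
    r (a ⊔ d) d := by
  have h3 : r (a ⊔ b ⊔ d) (b ⊔ d) := cong_supr hr d h1
  have h4 : r (a ⊔ b ⊔ d) d := hr.1.trans h3 h2
  have h5 : r d (a ⊔ d) := cong_interval hr le_sup_right
    (by rw [sup_assoc]; exact sup_le_sup_left le_sup_right a) (hr.1.symm h4)
  exact hr.1.symm h5

theorem rle_sup (hr : IsCongruence r) {a b d : α} (h1 : r (a ⊔ d) d) (h2 : r (b ⊔ d) d) :
    r (a ⊔ b ⊔ d) d := by
  have h3 := hr.2 _ _ _ _ h1 h2
  rw [sup_sup_sup_comm, sup_idem] at h3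
  exact h3

theorem part1_key1 (hr : IsCongruence r) (hs : IsCongruence s)
    (heq : ∀ a b : α, r a b → s a b → a = b) {c x x₁ x₂ m : α}
    (hx₁ : r x₁ c) (hx₂ : s x₂ c) (hle : x₁ ⊔ x₂ ≤ x ⊔ c)
    (hm1 : s m (x ⊔ x₁)) (hm2 : r m (x ⊔ x₂)) : PMeet (x ⊔ x₁) (x ⊔ x₂) m := by
  have le2 : ∀ a b : α, r (a ⊔ b) b → s (a ⊔ b) b → a ≤ b := fun a b h h' =>
    sup_eq_right.mp (heq _ _ h h')
  have hx₁le : x₁ ≤ x ⊔ c := le_sup_left.trans hle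
  have hx₂le : x₂ ≤ x ⊔ c := le_sup_right.trans hle
  refine ⟨?_, ?_, ?_⟩
  · refine le2 _ _ ?_ (rle_of_rel hs hm1)
    refine rle_trans hr (rle_of_rel hr hm2) ?_
    refine rle_sup hr (rle_of_le hr le_sup_left) ?_
    refine rle_trans hr (rle_of_le hr hx₂le) ?_
    refine rle_sup hr (rle_of_le hr le_sup_left) ?_
    exact rle_trans hr (rle_of_rel hr (hr.1.symm hx₁)) (rle_of_le hr le_sup_right)
  · refine le2 _ _ (rle_of_rel hr hm2) ?_
    refine rle_trans hs (rle_of_rel hs hm1) ?_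
    refine rle_sup hs (rle_of_le hs le_sup_left) ?_
    refine rle_trans hs (rle_of_le hs hx₁le) ?_
    refine rle_sup hs (rle_of_le hs le_sup_left) ?_
    exact rle_trans hs (rle_of_rel hs (hs.1.symm hx₂)) (rle_of_le hs le_sup_right)
  · intro u hu1 hu2
    refine le2 u m ?_ ?_
    · exact rle_trans hr (rle_of_le hr hu2) (rle_of_rel hr (hr.1.symm hm2))
    · exact rle_trans hs (rle_of_le hs hu1) (rle_of_rel hs (hs.1.symm hm1))

theorem part1_key2 (hr : IsCongruence r) (hs : IsCongruence s)
    (heq : ∀ a b : α, r a b → s a b → a = b) {c x y x₁ x₂ m : α}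
    (hx₁ : r x₁ c) (hx₂ : s x₂ c) (hxle : x ≤ x₁ ⊔ x₂)
    (hm1 : s m (x ⊔ y ⊔ x₁)) (hm2 : r m (c ⊔ y ⊔ x₁)) :
    PMeet (x ⊔ y ⊔ x₁) (c ⊔ y ⊔ x₁) m := by
  have le2 : ∀ a b : α, r (a ⊔ b) b → s (a ⊔ b) b → a ≤ b := fun a b h h' =>
    sup_eq_right.mp (heq _ _ h h')
  refine ⟨?_, ?_, ?_⟩
  · refine le2 _ _ ?_ (rle_of_rel hs hm1)
    refine rle_trans hr (rle_of_rel hr hm2) ?_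
    refine rle_sup hr (rle_sup hr ?_ ?_) ?_
    · exact rle_trans hr (rle_of_rel hr (hr.1.symm hx₁)) (rle_of_le hr le_sup_right)
    · exact rle_of_le hr (le_sup_right.trans le_sup_left)
    · exact rle_of_le hr le_sup_right
  · refine le2 _ _ (rle_of_rel hr hm2) ?_
    refine rle_trans hs (rle_of_rel hs hm1) ?_
    refine rle_sup hs (rle_sup hs ?_ ?_) ?_
    · refine rle_trans hs (rle_of_le hs hxle) ?_
      refine rle_sup hs (rle_of_le hs le_sup_right) ?_
      exact rle_trans hs (rle_of_rel hs hx₂) (rle_of_le hs (le_sup_left.trans le_sup_left))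
    · exact rle_of_le hs (le_sup_right.trans le_sup_left)
    · exact rle_of_le hs le_sup_right
  · intro u hu1 hu2
    refine le2 u m ?_ ?_
    · exact rle_trans hr (rle_of_le hr hu2) (rle_of_rel hr (hr.1.symm hm2))
    · exact rle_trans hs (rle_of_le hs hu1) (rle_of_rel hs (hs.1.symm hm1))

theorem part1_phi (hr : IsCongruence r) (hs : IsCongruence s)
    (heq : ∀ a b : α, r a b → s a b → a = b) {c x w₁ w₂ : α}
    (h1 : s x w₁) (h2 : r w₁ c) (h3 : r x w₂) (h4 : s w₂ c) : Phi c w₁ w₂ x := by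
  have le2 : ∀ a b : α, r (a ⊔ b) b → s (a ⊔ b) b → a ≤ b := fun a b h h' =>
    sup_eq_right.mp (heq _ _ h h')
  refine ⟨⟨le_sup_left, le_sup_left, ?_⟩, ⟨le_sup_right, le_sup_right, ?_⟩,
    ⟨le_sup_right, le_sup_right, ?_⟩, ?_⟩
  · intro u hu1 hu2
    refine le2 u x ?_ ?_
    · exact rle_trans hr (rle_of_le hr hu2)
        (rle_sup hr (rle_of_le hr le_rfl) (rle_of_rel hr (hr.1.symm h3)))
    · exact rle_trans hs (rle_of_le hs hu1)
        (rle_sup hs (rle_of_le hs le_rfl) (rle_of_rel hs (hs.1.symm h1)))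
  · intro u hu1 hu2
    refine le2 u w₁ ?_ ?_
    · exact rle_trans hr (rle_of_le hr hu2)
        (rle_sup hr (rle_of_rel hr (hr.1.symm h2)) (rle_of_le hr le_rfl))
    · exact rle_trans hs (rle_of_le hs hu1)
        (rle_sup hs (rle_of_rel hs h1) (rle_of_le hs le_rfl))
  · intro u hu1 hu2
    refine le2 u w₂ ?_ ?_
    · exact rle_trans hr (rle_of_le hr hu1)
        (rle_sup hr (rle_of_rel hr h3) (rle_of_le hr le_rfl))
    · exact rle_trans hs (rle_of_le hs hu2)
        (rle_sup hs (rle_of_rel hs (hs.1.symm h4)) (rle_of_le hs le_rfl))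
  · refine heq _ _ ?_ ?_
    · have := hr.2 _ _ _ _ h2 (hr.1.symm h3)
      rwa [sup_comm c x] at this
    · exact hs.2 _ _ _ _ (hs.1.symm h1) h4

theorem part1_unique (hr : IsCongruence r) (hs : IsCongruence s)
    (hco : Complementary r s) {c x x₁ x₂ : α}
    (hphi : Phi c x₁ x₂ x) (hx₁ : r x₁ c) (hx₂ : s x₂ c) : s x x₁ ∧ r x x₂ := by
  obtain ⟨hd, hp1, hp2, hj⟩ := hphi
  have heq := hco.1
  have le2 : ∀ a b : α, r (a ⊔ b) b → s (a ⊔ b) b → a ≤ b := fun a b h h' =>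
    sup_eq_right.mp (heq _ _ h h')
  have hx₁le : x₁ ≤ x ⊔ c := by rw [← hj]; exact le_sup_left
  have hx₂le : x₂ ≤ x ⊔ c := by rw [← hj]; exact le_sup_right
  have hrcx₂ : r (x ⊔ c) (c ⊔ x₂) := by
    have := cong_supr hr x₂ hx₁
    rwa [hj] at this
  have hscx₁ : s (x ⊔ c) (c ⊔ x₁) := by
    have := cong_supr hs x₁ hx₂
    rwa [sup_comm x₂ x₁, hj] at this
  obtain ⟨v, hv1, hv2⟩ := hco.2 (x ⊔ x₂) (x ⊔ x₁)
  have hθv : r (v ⊔ x) (x ⊔ x₂) := by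
    have := cong_supr hr x (hr.1.symm hv1)
    rwa [sup_right_comm, sup_idem] at this
  have hδv : s (v ⊔ x) (x ⊔ x₁) := by
    have := cong_supr hs x hv2
    rwa [sup_right_comm, sup_idem] at this
  have hvle1 : v ⊔ x ≤ x ⊔ x₁ := by
    refine le2 _ _ ?_ (rle_of_rel hs hδv)
    refine rle_trans hr (rle_of_rel hr hθv) ?_
    refine rle_sup hr (rle_of_le hr le_sup_left) ?_
    refine rle_trans hr (rle_of_le hr hx₂le) ?_
    refine rle_sup hr (rle_of_le hr le_sup_left) ?_
    exact rle_trans hr (rle_of_rel hr (hr.1.symm hx₁)) (rle_of_le hr le_sup_right)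
  have hvle2 : v ⊔ x ≤ x ⊔ x₂ := by
    refine le2 _ _ (rle_of_rel hr hθv) ?_
    refine rle_trans hs (rle_of_rel hs hδv) ?_
    refine rle_sup hs (rle_of_le hs le_sup_left) ?_
    refine rle_trans hs (rle_of_le hs hx₁le) ?_
    refine rle_sup hs (rle_of_le hs le_sup_left) ?_
    exact rle_trans hs (rle_of_rel hs (hs.1.symm hx₂)) (rle_of_le hs le_sup_right)
  have hveq : v ⊔ x = x := le_antisymm (hd.2.2 _ hvle1 hvle2) le_sup_right
  have hrxx₂ : r x (x ⊔ x₂) := by have := hθv; rwa [hveq] at this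
  have hsxx₁ : s x (x ⊔ x₁) := by have := hδv; rwa [hveq] at this
  obtain ⟨z₂, hz1, hz2⟩ := hco.2 x c
  have hz₂a : z₂ ≤ x ⊔ x₂ := by
    refine le2 _ _ ?_ ?_
    · exact rle_trans hr (rle_of_rel hr (hr.1.symm hz1)) (rle_of_le hr le_sup_left)
    · refine rle_trans hs (rle_of_rel hs hz2) ?_
      refine rle_trans hs (rle_of_le hs (le_sup_right : c ≤ x ⊔ c)) ?_
      refine rle_sup hs (rle_of_le hs le_sup_left) ?_
      exact rle_trans hs (rle_of_rel hs (hs.1.symm hx₂)) (rle_of_le hs le_sup_right)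
  have hz₂b : z₂ ≤ c ⊔ x₂ := by
    refine le2 _ _ ?_ ?_
    · refine rle_trans hr (rle_of_rel hr (hr.1.symm hz1)) ?_
      refine rle_trans hr (rle_of_le hr (le_sup_left : x ≤ x ⊔ c)) ?_
      exact rle_of_rel hr hrcx₂
    · exact rle_trans hs (rle_of_rel hs hz2) (rle_of_le hs le_sup_left)
  have hz₂x₂ : z₂ ≤ x₂ := hp2.2.2 z₂ hz₂a hz₂b
  have hrz₂x₂ : r z₂ x₂ := cong_interval hr hz₂x₂ le_sup_right
    (hr.1.trans (hr.1.symm hz1) hrxx₂)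
  have hz₂eq : z₂ = x₂ := heq _ _ hrz₂x₂ (hs.1.trans hz2 (hs.1.symm hx₂))
  have hrx : r x x₂ := hz₂eq ▸ hz1
  obtain ⟨z₁, hw1, hw2⟩ := hco.2 c x
  have hz₁a : z₁ ≤ x ⊔ x₁ := by
    refine le2 _ _ ?_ ?_
    · refine rle_trans hr (rle_of_rel hr (hr.1.symm hw1)) ?_
      exact rle_trans hr (rle_of_rel hr (hr.1.symm hx₁)) (rle_of_le hr le_sup_right)
    · exact rle_trans hs (rle_of_rel hs hw2) (rle_of_le hs le_sup_left)
  have hz₁b : z₁ ≤ c ⊔ x₁ := by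
    refine le2 _ _ ?_ ?_
    · exact rle_trans hr (rle_of_rel hr (hr.1.symm hw1)) (rle_of_le hr le_sup_left)
    · refine rle_trans hs (rle_of_rel hs hw2) ?_
      refine rle_trans hs (rle_of_le hs (le_sup_left : x ≤ x ⊔ c)) ?_
      exact rle_of_rel hs hscx₁
  have hz₁x₁ : z₁ ≤ x₁ := hp1.2.2 z₁ hz₁a hz₁b
  have hsz₁x₁ : s z₁ x₁ := cong_interval hs hz₁x₁ le_sup_right (hs.1.trans hw2 hsxx₁)
  have hz₁eq : z₁ = x₁ := heq _ _ (hr.1.trans (hr.1.symm hw1) (hr.1.symm hx₁)) hsz₁x₁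
  have hsx : s x x₁ := hz₁eq ▸ (hs.1.symm hw2)
  exact ⟨hsx, hrx⟩

theorem part1_abs_le (hr : IsCongruence r) (hs : IsCongruence s)
    (heq : ∀ a b : α, r a b → s a b → a = b) {c x₁ y₁ e f u : α}
    (hx₁ : r x₁ c) (hy₁ : r y₁ c) (he : s e c) (hf : s f c)
    (hu1 : u ≤ x₁) (hu2 : u ≤ y₁ ⊔ e) : u ≤ y₁ ⊔ f := by
  have le2 : ∀ a b : α, r (a ⊔ b) b → s (a ⊔ b) b → a ≤ b := fun a b h h' =>
    sup_eq_right.mp (heq _ _ h h')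
  refine le2 _ _ ?_ ?_
  · refine rle_trans hr (rle_of_le hr hu1) ?_
    refine rle_trans hr (rle_of_rel hr hx₁) ?_
    exact rle_trans hr (rle_of_rel hr (hr.1.symm hy₁)) (rle_of_le hr le_sup_left)
  · refine rle_trans hs (rle_of_le hs hu2) ?_
    refine rle_sup hs (rle_of_le hs le_sup_left) ?_
    exact rle_trans hs (rle_of_rel hs (hs.1.trans he (hs.1.symm hf))) (rle_of_le hs le_sup_right)

theorem part1_abs (hr : IsCongruence r) (hs : IsCongruence s)
    (heq : ∀ a b : α, r a b → s a b → a = b) {c x₁ y₁ e f m : α}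
    (hx₁ : r x₁ c) (hy₁ : r y₁ c) (he : s e c) (hf : s f c)
    (h : PMeet x₁ (y₁ ⊔ e) m) : PMeet x₁ (y₁ ⊔ f) m :=
  ⟨h.1, part1_abs_le hr hs heq hx₁ hy₁ he hf h.1 h.2.1,
   fun u hu1 hu2 => h.2.2 u hu1 (part1_abs_le hr hs heq hx₁ hy₁ hf he hu1 hu2)⟩

end Helpers

section Part1CDS
variable [SemilatticeSup α] {θ δ : α → α → Prop}

theorem part1_cds (hθ : IsCongruence θ) (hδ : IsCongruence δ) (hco : Complementary θ δ)
    (c : α) : CDirectSum c {a : α | θ a c} {a : α | δ a c} := by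
  have heq := hco.1
  have heq' : ∀ a b : α, δ a b → θ a b → a = b := fun a b h h' => heq a b h' h
  refine ⟨?_, ?_, ?_, ?_, ?_, ?_, ?_, ?_⟩
  · intro a ha b hb
    have h := hθ.2 a c b c ha hb
    show θ (a ⊔ b) c
    rwa [sup_idem] at h
  · intro a ha b hb
    have h := hδ.2 a c b c ha hb
    show δ (a ⊔ b) c
    rwa [sup_idem] at h
  · -- mod1
    intro x y x₁ hx₁ x₂ hx₂ hle
    obtain ⟨m₀, hA, hB⟩ := hco.2 (x ⊔ x₂) (x ⊔ x₁)
    have hbase : PMeet (x ⊔ x₁) (x ⊔ x₂) m₀ :=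
      part1_key1 hθ hδ heq hx₁ hx₂ hle hB (hθ.1.symm hA)
    have h1 : δ (m₀ ⊔ y) (x ⊔ y ⊔ x₁) := by
      have := cong_supr hδ y hB; rwa [sup_right_comm] at this
    have h2 : θ (m₀ ⊔ y) (x ⊔ y ⊔ x₂) := by
      have := cong_supr hθ y (hθ.1.symm hA); rwa [sup_right_comm] at this
    have hsh : PMeet (x ⊔ y ⊔ x₁) (x ⊔ y ⊔ x₂) (m₀ ⊔ y) :=
      part1_key1 hθ hδ heq hx₁ hx₂ (hle.trans (sup_le_sup_right le_sup_left c)) h1 h2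
    constructor
    · intro m hm
      rw [pmeet_unique hm hbase]; exact hsh
    · intro m' hm'
      exact ⟨m₀, hbase, pmeet_unique hsh hm'⟩
  · -- mod2
    intro x y x₁ hx₁ x₂ hx₂ hxle
    constructor
    · obtain ⟨m₀, hA, hB⟩ := hco.2 (c ⊔ x₁) (x ⊔ x₁)
      have hB' : δ m₀ (x ⊔ x₁ ⊔ x₁) := by rw [sup_assoc, sup_idem]; exact hB
      have hA' : θ m₀ (c ⊔ x₁ ⊔ x₁) := by rw [sup_assoc, sup_idem]; exact hθ.1.symm hA
      have hbase : PMeet (x ⊔ x₁) (c ⊔ x₁) m₀ := by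
        have h := part1_key2 hθ hδ heq hx₁ hx₂ hxle hB' hA'
        simpa only [sup_assoc, sup_idem] using h
      have h1 : δ (m₀ ⊔ y) (x ⊔ y ⊔ x₁) := by
        have := cong_supr hδ y hB; rwa [sup_right_comm] at this
      have h2 : θ (m₀ ⊔ y) (c ⊔ y ⊔ x₁) := by
        have := cong_supr hθ y (hθ.1.symm hA); rwa [sup_right_comm] at this
      have hsh : PMeet (x ⊔ y ⊔ x₁) (c ⊔ y ⊔ x₁) (m₀ ⊔ y) :=
        part1_key2 hθ hδ heq hx₁ hx₂ hxle h1 h2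
      constructor
      · intro m hm
        rw [pmeet_unique hm hbase]; exact hsh
      · intro m' hm'
        exact ⟨m₀, hbase, pmeet_unique hsh hm'⟩
    · obtain ⟨m₀, hA, hB⟩ := hco.2 (x ⊔ x₂) (c ⊔ x₂)
      have hxle' : x ≤ x₂ ⊔ x₁ := by rwa [sup_comm x₂ x₁]
      have hA' : θ m₀ (x ⊔ x₂ ⊔ x₂) := by rw [sup_assoc, sup_idem]; exact hθ.1.symm hA
      have hB' : δ m₀ (c ⊔ x₂ ⊔ x₂) := by rw [sup_assoc, sup_idem]; exact hB
      have hbase : PMeet (x ⊔ x₂) (c ⊔ x₂) m₀ := by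
        have h := part1_key2 hδ hθ heq' hx₂ hx₁ hxle' hA' hB'
        simpa only [sup_assoc, sup_idem] using h
      have h1 : θ (m₀ ⊔ y) (x ⊔ y ⊔ x₂) := by
        have := cong_supr hθ y (hθ.1.symm hA); rwa [sup_right_comm] at this
      have h2 : δ (m₀ ⊔ y) (c ⊔ y ⊔ x₂) := by
        have := cong_supr hδ y hB; rwa [sup_right_comm] at this
      have hsh : PMeet (x ⊔ y ⊔ x₂) (c ⊔ y ⊔ x₂) (m₀ ⊔ y) :=
        part1_key2 hδ hθ heq' hx₂ hx₁ hxle' h1 h2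
      constructor
      · intro m hm
        rw [pmeet_unique hm hbase]; exact hsh
      · intro m' hm'
        exact ⟨m₀, hbase, pmeet_unique hsh hm'⟩
  · -- abs1
    intro x₁ hx₁ y₁ hy₁ z₂ hz₂
    exact ⟨fun m hm => part1_abs hθ hδ heq hx₁ hy₁ hz₂ (hδ.1.refl c) hm,
           fun m hm => part1_abs hθ hδ heq hx₁ hy₁ (hδ.1.refl c) hz₂ hm⟩
  · -- abs2
    intro x₂ hx₂ y₂ hy₂ z₁ hz₁
    exact ⟨fun m hm => part1_abs hδ hθ heq' hx₂ hy₂ hz₁ (hθ.1.refl c) hm,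
           fun m hm => part1_abs hδ hθ heq' hx₂ hy₂ (hθ.1.refl c) hz₁ hm⟩
  · -- exi
    intro x₁ hx₁ x₂ hx₂
    obtain ⟨x, h1, h2⟩ := hco.2 x₂ x₁
    exact ⟨x, part1_phi hθ hδ heq h2 hx₁ (hθ.1.symm h1) hx₂⟩
  · -- onto
    intro x
    obtain ⟨z₁, h1, h2⟩ := hco.2 c x
    obtain ⟨z₂, h3, h4⟩ := hco.2 x c
    exact ⟨z₁, hθ.1.symm h1, z₂, h4,
      part1_phi hθ hδ heq (hδ.1.symm h2) (hθ.1.symm h1) h3 h4⟩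

theorem part1_kernels (hθ : IsCongruence θ) (hδ : IsCongruence δ) (hco : Complementary θ δ)
    (c : α) (π₁ π₂ : α → α)
    (hπ : ∀ x : α, π₁ x ∈ {a : α | θ a c} ∧ π₂ x ∈ {a : α | δ a c} ∧
      Phi c (π₁ x) (π₂ x) x) :
    (∀ a b : α, θ a b ↔ π₂ a = π₂ b) ∧ (∀ a b : α, δ a b ↔ π₁ a = π₁ b) := by
  have hdec : ∀ x, δ x (π₁ x) ∧ θ x (π₂ x) := fun x =>
    part1_unique hθ hδ hco (hπ x).2.2 (hπ x).1 (hπ x).2.1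
  constructor
  · intro a b
    constructor
    · intro h
      refine hco.1 _ _ ?_ ?_
      · exact hθ.1.trans (hθ.1.symm (hdec a).2) (hθ.1.trans h (hdec b).2)
      · exact hδ.1.trans (hπ a).2.1 (hδ.1.symm (hπ b).2.1)
    · intro h
      have ha := (hdec a).2
      rw [h] at ha
      exact hθ.1.trans ha (hθ.1.symm (hdec b).2)
  · intro a b
    constructor
    · intro h
      refine hco.1 _ _ ?_ ?_
      · exact hθ.1.trans (hπ a).1 (hθ.1.symm (hπ b).1)
      · exact hδ.1.trans (hδ.1.symm (hdec a).1) (hδ.1.trans h (hdec b).1)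
    · intro h
      have ha := (hdec a).1
      rw [h] at ha
      exact hδ.1.trans ha (hδ.1.symm (hdec b).1)
end Part1CDS

section Part2
variable [SemilatticeSup α] {c : α} {I₁ I₂ : Set α}

theorem p2_L1 (ds : CDirectSum c I₁ I₂) {a p q : α} (ha : a ∈ I₁) (hp : p ∈ I₁)
    (hq : q ∈ I₂) : a ≤ p ⊔ q ↔ a ≤ p ⊔ c := by
  constructor
  · intro h; exact ((ds.abs1 a ha p hp q hq).1 a (pmeet_of_le h)).2.1
  · intro h; exact ((ds.abs1 a ha p hp q hq).2 a (pmeet_of_le h)).2.1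

theorem p2_L2 (ds : CDirectSum c I₁ I₂) {a p q : α} (ha : a ∈ I₂) (hp : p ∈ I₂)
    (hq : q ∈ I₁) : a ≤ p ⊔ q ↔ a ≤ p ⊔ c := by
  constructor
  · intro h; exact ((ds.abs2 a ha p hp q hq).1 a (pmeet_of_le h)).2.1
  · intro h; exact ((ds.abs2 a ha p hp q hq).2 a (pmeet_of_le h)).2.1

theorem p2_ole (ds : CDirectSum c I₁ I₂) {x y x₁ x₂ y₁ y₂ : α}
    (h1 : x₁ ∈ I₁) (h2 : x₂ ∈ I₂) (k1 : y₁ ∈ I₁) (k2 : y₂ ∈ I₂)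
    (hx : Phi c x₁ x₂ x) (hy : Phi c y₁ y₂ y) (hxy : x ≤ y) :
    x₁ ≤ y₁ ∧ x₂ ≤ y₂ := by
  have hjx : x₁ ⊔ x₂ = x ⊔ c := hx.2.2.2
  have hjy : y₁ ⊔ y₂ = y ⊔ c := hy.2.2.2
  have hxc : x ⊔ c ≤ y ⊔ c := sup_le_sup_right hxy c
  have hx₁yc : x₁ ≤ y₁ ⊔ c := by
    refine (p2_L1 ds h1 k1 k2).1 ?_
    rw [hjy]
    exact (le_sup_left.trans hjx.le).trans hxc
  have hx₂yc : x₂ ≤ y₂ ⊔ c := by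
    refine (p2_L2 ds h2 k2 k1).1 ?_
    rw [sup_comm y₂ y₁, hjy]
    exact (le_sup_right.trans hjx.le).trans hxc
  have hA : PMeet (y ⊔ x₁) (y ⊔ x₂) y := by
    have h := (ds.mod1 x y x₁ h1 x₂ h2 hjx.le).1 x hx.1
    rwa [sup_eq_right.mpr hxy] at h
  have hB1 := (ds.mod1 y y₁ x₁ h1 x₂ h2 (hjx.le.trans hxc)).1 y hA
  have hB2 := (ds.mod1 y y₂ x₁ h1 x₂ h2 (hjx.le.trans hxc)).1 y hA
  have hx₁y : x₁ ≤ y ⊔ y₁ := by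
    refine hB1.2.2 x₁ le_sup_right ?_
    have : x₁ ≤ y₁ ⊔ x₂ := (p2_L1 ds h1 k1 h2).2 hx₁yc
    exact this.trans (sup_le_sup_right le_sup_right x₂)
  have hx₂y : x₂ ≤ y ⊔ y₂ := by
    refine hB2.2.2 x₂ ?_ le_sup_right
    have : x₂ ≤ y₂ ⊔ x₁ := (p2_L2 ds h2 k2 h1).2 hx₂yc
    exact this.trans (sup_le_sup_right le_sup_right x₁)
  constructor
  · exact hy.2.1.2.2 x₁ hx₁y (by rw [sup_comm c y₁]; exact hx₁yc)
  · exact hy.2.2.1.2.2 x₂ hx₂y (by rw [sup_comm c y₂]; exact hx₂yc)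

theorem p2_oge (ds : CDirectSum c I₁ I₂) {x y x₁ x₂ y₁ y₂ : α}
    (h1 : x₁ ∈ I₁) (h2 : x₂ ∈ I₂) (k1 : y₁ ∈ I₁) (k2 : y₂ ∈ I₂)
    (hx : Phi c x₁ x₂ x) (hy : Phi c y₁ y₂ y) (e1 : x₁ ≤ y₁) (e2 : x₂ ≤ y₂) :
    x ≤ y := by
  have hjx : x₁ ⊔ x₂ = x ⊔ c := hx.2.2.2
  have hjy : y₁ ⊔ y₂ = y ⊔ c := hy.2.2.2
  have hxle : x ≤ x₁ ⊔ x₂ := by rw [hjx]; exact le_sup_left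
  have hy₁yc : y₁ ≤ y ⊔ c := le_sup_left.trans hjy.le
  have hy₂yc : y₂ ≤ y ⊔ c := le_sup_right.trans hjy.le
  have hm2 := ds.mod2 x y x₁ h1 x₂ h2 hxle
  have hC := hm2.1.1 x₁ hx.2.1
  have hD := hm2.2.1 x₂ hx.2.2.1
  have hxx₁y : x ≤ x₁ ⊔ y := by
    refine hC.2.2 x (le_sup_left.trans le_sup_left) ?_
    refine hxle.trans (sup_le le_sup_right ?_)
    refine (e2.trans hy₂yc).trans ?_
    rw [sup_comm y c]
    exact le_sup_left
  have hxx₂y : x ≤ x₂ ⊔ y := by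
    refine hD.2.2 x (le_sup_left.trans le_sup_left) ?_
    refine hxle.trans (sup_le ?_ le_sup_right)
    refine (e1.trans hy₁yc).trans ?_
    rw [sup_comm y c]
    exact le_sup_left
  refine hy.1.2.2 x ?_ ?_
  · exact hxx₁y.trans (by rw [sup_comm y y₁]; exact sup_le_sup_right e1 y)
  · exact hxx₂y.trans (by rw [sup_comm y y₂]; exact sup_le_sup_right e2 y)

theorem p2_uniq (ds : CDirectSum c I₁ I₂) {x x₁ x₂ y₁ y₂ : α}
    (h1 : x₁ ∈ I₁) (h2 : x₂ ∈ I₂) (k1 : y₁ ∈ I₁) (k2 : y₂ ∈ I₂)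
    (hx : Phi c x₁ x₂ x) (hy : Phi c y₁ y₂ x) : x₁ = y₁ ∧ x₂ = y₂ := by
  have hA := p2_ole ds h1 h2 k1 k2 hx hy le_rfl
  have hB := p2_ole ds k1 k2 h1 h2 hy hx le_rfl
  exact ⟨le_antisymm hA.1 hB.1, le_antisymm hA.2 hB.2⟩

theorem p2_inj (ds : CDirectSum c I₁ I₂) {x x' x₁ x₂ : α}
    (h1 : x₁ ∈ I₁) (h2 : x₂ ∈ I₂)
    (hx : Phi c x₁ x₂ x) (hx' : Phi c x₁ x₂ x') : x = x' :=
  le_antisymm (p2_oge ds h1 h2 h1 h2 hx hx' le_rfl le_rfl)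
    (p2_oge ds h1 h2 h1 h2 hx' hx le_rfl le_rfl)

theorem p2_join (ds : CDirectSum c I₁ I₂) {a b a₁ a₂ b₁ b₂ : α}
    (h1 : a₁ ∈ I₁) (h2 : a₂ ∈ I₂) (k1 : b₁ ∈ I₁) (k2 : b₂ ∈ I₂)
    (hx : Phi c a₁ a₂ a) (hy : Phi c b₁ b₂ b) :
    Phi c (a₁ ⊔ b₁) (a₂ ⊔ b₂) (a ⊔ b) := by
  obtain ⟨w₁, hw1, w₂, hw2, hw⟩ := ds.onto (a ⊔ b)
  obtain ⟨z, hz⟩ := ds.exi (a₁ ⊔ b₁) (ds.sub1 _ h1 _ k1) (a₂ ⊔ b₂) (ds.sub2 _ h2 _ k2)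
  have ha := p2_ole ds h1 h2 hw1 hw2 hx hw le_sup_left
  have hb := p2_ole ds k1 k2 hw1 hw2 hy hw le_sup_right
  have haz : a ≤ z := p2_oge ds h1 h2 (ds.sub1 _ h1 _ k1) (ds.sub2 _ h2 _ k2)
    hx hz le_sup_left le_sup_left
  have hbz : b ≤ z := p2_oge ds k1 k2 (ds.sub1 _ h1 _ k1) (ds.sub2 _ h2 _ k2)
    hy hz le_sup_right le_sup_right
  have hzab : z ≤ a ⊔ b := p2_oge ds (ds.sub1 _ h1 _ k1) (ds.sub2 _ h2 _ k2) hw1 hw2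
    hz hw (sup_le ha.1 hb.1) (sup_le ha.2 hb.2)
  have : z = a ⊔ b := le_antisymm hzab (sup_le haz hbz)
  rwa [this] at hz

theorem p2_cmem (ds : CDirectSum c I₁ I₂) : c ∈ I₁ ∧ c ∈ I₂ := by
  obtain ⟨c₁, h1, c₂, h2, hphi⟩ := ds.onto c
  have hj : c₁ ⊔ c₂ = c := by
    have := hphi.2.2.2; rwa [sup_idem] at this
  have hp1 := hphi.2.1
  have hp2 := hphi.2.2.1
  have hcc₁ : c ≤ c₁ := by
    have h := hp1.2.2 (c ⊔ c₁) le_rfl le_rfl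
    exact le_sup_left.trans h
  have hcc₂ : c ≤ c₂ := by
    have h := hp2.2.2 (c ⊔ c₂) le_rfl le_rfl
    exact le_sup_left.trans h
  have e1 : c₁ = c := le_antisymm (le_sup_left.trans hj.le) hcc₁
  have e2 : c₂ = c := le_antisymm (le_sup_right.trans hj.le) hcc₂
  exact ⟨e1 ▸ h1, e2 ▸ h2⟩

theorem p2_phi_ccc : Phi (α := α) c c c c := by
  refine ⟨?_, ?_, ?_, rfl⟩ <;>
  · rw [sup_idem]
    exact pmeet_of_le le_rfl

theorem p2_phi_self1 {a : α} : Phi c a c a := by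
  refine ⟨⟨?_, ?_, ?_⟩, ⟨?_, ?_, ?_⟩, ⟨?_, ?_, ?_⟩, rfl⟩
  · exact le_sup_left
  · exact le_sup_left
  · intro u hu _; exact hu.trans (by rw [sup_idem])
  · exact le_sup_right
  · exact le_sup_right
  · intro u hu _; exact hu.trans (by rw [sup_idem])
  · exact le_sup_right
  · rw [sup_idem]
  · intro u _ hu; exact hu.trans (by rw [sup_idem])

theorem p2_phi_self2 {a : α} : Phi c c a a := by
  refine ⟨⟨?_, ?_, ?_⟩, ⟨?_, ?_, ?_⟩, ⟨?_, ?_, ?_⟩, sup_comm c a⟩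
  · exact le_sup_left
  · exact le_sup_left
  · intro u _ hu; exact hu.trans (by rw [sup_idem])
  · exact le_sup_right
  · rw [sup_idem]
  · intro u _ hu; exact hu.trans (by rw [sup_idem])
  · exact le_sup_right
  · exact le_sup_right
  · intro u hu _; exact hu.trans (by rw [sup_idem])

end Part2

section Main
variable [SemilatticeSup α]

theorem p2_main {c : α} {I₁ I₂ : Set α} (ds : CDirectSum c I₁ I₂) (π₁ π₂ : α → α)
    (hπ : ∀ x : α, π₁ x ∈ I₁ ∧ π₂ x ∈ I₂ ∧ Phi c (π₁ x) (π₂ x) x) :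
    IsCongruence (fun a b : α => π₂ a = π₂ b) ∧
    IsCongruence (fun a b : α => π₁ a = π₁ b) ∧
    Complementary (fun a b : α => π₂ a = π₂ b) (fun a b : α => π₁ a = π₁ b) ∧
    I₁ = {a : α | π₂ a = π₂ c} ∧ I₂ = {a : α | π₁ a = π₁ c} := by
  obtain ⟨hc1, hc2⟩ := p2_cmem ds
  have huniq : ∀ x a₁ a₂, a₁ ∈ I₁ → a₂ ∈ I₂ → Phi c a₁ a₂ x →
      a₁ = π₁ x ∧ a₂ = π₂ x := fun x a₁ a₂ m1 m2 hphi =>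
    p2_uniq ds m1 m2 (hπ x).1 (hπ x).2.1 hphi (hπ x).2.2
  have hπc : π₁ c = c ∧ π₂ c = c := by
    have h := huniq c c c hc1 hc2 p2_phi_ccc
    exact ⟨h.1.symm, h.2.symm⟩
  have hadd : ∀ a b : α, π₁ (a ⊔ b) = π₁ a ⊔ π₁ b ∧ π₂ (a ⊔ b) = π₂ a ⊔ π₂ b := by
    intro a b
    have hj := p2_join ds (hπ a).1 (hπ a).2.1 (hπ b).1 (hπ b).2.1 (hπ a).2.2 (hπ b).2.2
    have h := huniq (a ⊔ b) _ _ (ds.sub1 _ (hπ a).1 _ (hπ b).1)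
      (ds.sub2 _ (hπ a).2.1 _ (hπ b).2.1) hj
    exact ⟨h.1.symm, h.2.symm⟩
  refine ⟨⟨⟨fun _ => rfl, Eq.symm, Eq.trans⟩, ?_⟩,
          ⟨⟨fun _ => rfl, Eq.symm, Eq.trans⟩, ?_⟩, ⟨?_, ?_⟩, ?_, ?_⟩
  · intro a b a' b' h h'
    simp only [(hadd a a').2, (hadd b b').2, h, h']
  · intro a b a' b' h h'
    simp only [(hadd a a').1, (hadd b b').1, h, h']
  · intro a b h2 h1
    have ha := (hπ a).2.2
    rw [h1, h2] at ha
    exact p2_inj ds (hπ b).1 (hπ b).2.1 ha (hπ b).2.2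
  · intro a b
    obtain ⟨z, hz⟩ := ds.exi (π₁ b) (hπ b).1 (π₂ a) (hπ a).2.1
    have h := huniq z _ _ (hπ b).1 (hπ a).2.1 hz
    exact ⟨z, h.2, h.1.symm⟩
  · ext a
    simp only [Set.mem_setOf_eq, hπc.2]
    constructor
    · intro ha
      exact (huniq a a c ha hc2 p2_phi_self1).2.symm
    · intro ha
      have hphi := (hπ a).2.2
      rw [ha] at hphi
      obtain ⟨hd, hp1, hp2, hj⟩ := hphi
      have hle1 : a ≤ π₁ a := by
        refine hp1.2.2 a le_sup_left ?_
        rw [sup_comm c (π₁ a), hj]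
        exact le_sup_left
      have hle2 : π₁ a ≤ a := by
        refine hd.2.2 _ le_sup_right ?_
        rw [← hj]
        exact le_sup_left
      have : a = π₁ a := le_antisymm hle1 hle2
      rw [this]
      exact (hπ a).1
  · ext a
    simp only [Set.mem_setOf_eq, hπc.1]
    constructor
    · intro ha
      exact (huniq a c a hc1 ha p2_phi_self2).1.symm
    · intro ha
      have hphi := (hπ a).2.2
      rw [ha] at hphi
      obtain ⟨hd, hp1, hp2, hj⟩ := hphi
      have hle1 : a ≤ π₂ a := by
        refine hp2.2.2 a le_sup_left ?_
        rw [hj]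
        exact le_sup_left
      have hle2 : π₂ a ≤ a := by
        refine hd.2.2 _ ?_ le_sup_right
        rw [← hj]
        exact le_sup_right
      have : a = π₂ a := le_antisymm hle1 hle2
      rw [this]
      exact (hπ a).2.1

end Main


/-- the maps ⟨θ,δ⟩ ↦ ⟨I_θ, I_δ⟩ and ⟨I₁,I₂⟩ ↦ ⟨ker π₂, ker π₁⟩
are mutually inverse bijections between pairs of complementary factor
congruences and pairs of subsemilattices with A = I₁ ⊕_c I₂. -/
theorem bijection_congruences_direct_sums [SemilatticeSup α] (c : α) :
    (∀ θ δ : α → α → Prop, IsCongruence θ → IsCongruence δ →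
      Complementary θ δ →
      CDirectSum c {a : α | θ a c} {a : α | δ a c} ∧
      ∀ π₁ π₂ : α → α,
        (∀ x : α, π₁ x ∈ {a : α | θ a c} ∧ π₂ x ∈ {a : α | δ a c} ∧
          Phi c (π₁ x) (π₂ x) x) →
        (∀ a b : α, θ a b ↔ π₂ a = π₂ b) ∧
        (∀ a b : α, δ a b ↔ π₁ a = π₁ b)) ∧
    (∀ I₁ I₂ : Set α, CDirectSum c I₁ I₂ →
      ∀ π₁ π₂ : α → α,
        (∀ x : α, π₁ x ∈ I₁ ∧ π₂ x ∈ I₂ ∧ Phi c (π₁ x) (π₂ x) x) →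
        IsCongruence (fun a b : α => π₂ a = π₂ b) ∧
        IsCongruence (fun a b : α => π₁ a = π₁ b) ∧
        Complementary (fun a b : α => π₂ a = π₂ b)
          (fun a b : α => π₁ a = π₁ b) ∧
        I₁ = {a : α | π₂ a = π₂ c} ∧ I₂ = {a : α | π₁ a = π₁ c}) := by
  constructor
  · intro θ δ hθ hδ hco
    exact ⟨part1_cds hθ hδ hco c, fun π₁ π₂ hπ => part1_kernels hθ hδ hco c π₁ π₂ hπ⟩
  · intro I₁ I₂ ds π₁ π₂ hπ
    exact p2_main ds π₁ π₂ hπ
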